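/- In the Power semantics, the accepting state reached by a computation is unique: if the initial state s₀ of the Power automaton of a program reaches final states s and s' via the same event sequence σ, then s = s'. -/

import Mathlib

/-! A formalization of the (corrected) operational Power memory model of
Sarkar et al., following "Lazy TSO Reachability"-style conventions:
programs are finite families of thread automata over commands; the Power
semantics is a labeled transition system over runtime thread states and a
storage-subsystem state, with fetch / load / commit / propagate events. -/

namespace PowerModel

/-- Values and addresses come from a common domain, here `ℕ` (containing `0`). -/
abbrev Val := ℕ
/-- Register names. -/
abbrev Reg := ℕ

/-- Expressions over constants, registers and (binary) functions on the domain;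
functions return `⊥` iff some argument is `⊥`, which is realized by `Option`-strictness
in the evaluator. -/
inductive Expr : Type
  | const : Val → Expr
  | reg : Reg → Expr
  | fn : (Val → Val → Val) → Expr → Expr → Expr

/-- Commands: loads, stores, local assignments and conditionals. -/
inductive Cmd : Type
  | load : Reg → Expr → Cmd
  | store : Expr → Expr → Cmd
  | assign : Reg → Expr → Cmd
  | assume_ : Expr → Cmd

def Cmd.isLoad : Cmd → Prop
  | .load _ _ => True
  | _ => False

def Cmd.isStore : Cmd → Prop
  | .store _ _ => True
  | _ => False

def Cmd.isMem : Cmd → Prop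
  | .load _ _ => True
  | .store _ _ => True
  | _ => False

/-- An instruction of a thread automaton: source control state, command,
destination control state. -/
structure Instr where
  src : ℕ
  cmd : Cmd
  dst : ℕ

/-- A thread is an automaton over commands: an initial control state and a set of
instructions (all control states are final). -/
structure Thread where
  start : ℕ
  instrs : Set Instr

/-- A program with `n` threads. -/
abbrev Program (n : ℕ) := Fin n → Thread

/-- Identifier of a store: either the initial store to an address, or the `i`-th
fetched instruction of thread `t`. -/
inductive StoreId (n : ℕ) : Type
  | init : Val → StoreId n
  | st : Fin n → ℕ → StoreId n

/-- Runtime state of a thread: the sequence of fetched instructions, the set of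
indices of committed instructions, and for every satisfied load its source store
together with the value read. -/
structure TState (n : ℕ) where
  fetched : List Instr
  committed : Set ℕ
  loaded : ℕ → Option (StoreId n × Val)

/-- Does the command write to register `r`? -/
def Cmd.writesTo : Cmd → Reg → Bool
  | .load r _, r' => r == r'
  | .assign r _, r' => r == r'
  | _, _ => false

/-- Index of the last instruction before position `i` writing to register `r`. -/
def lastWrite (f : List Instr) (i : ℕ) (r : Reg) : Option ℕ :=
  (List.range i).reverse.find? (fun j =>
    match f[j]? with
    | some ins => ins.cmd.writesTo r
    | none => false)

/-- Evaluate an expression given a (partial) register valuation; strict in `⊥`. -/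
def evalWith (ρ : Reg → Option Val) : Expr → Option Val
  | .const v => some v
  | .reg r => ρ r
  | .fn g e₁ e₂ => (evalWith ρ e₁).bind fun a => (evalWith ρ e₂).map fun b => g a b

/-- Value of register `r` right before the `i`-th fetched instruction
(`fuel`-bounded recursion; the chain of defining instructions strictly decreases,
so `fuel = i + 1` computes the true value). `none` is `⊥`. -/
def regV {n : ℕ} (f : List Instr) (ld : ℕ → Option (StoreId n × Val)) :
    ℕ → ℕ → Reg → Option Val
  | 0, _, _ => none
  | fuel + 1, i, r =>
    match lastWrite f i r with
    | none => some 0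
    | some i' =>
      match f[i']? with
      | some ins =>
        match ins.cmd with
        | .assign _ e => evalWith (fun r' => regV f ld fuel i' r') e
        | .load _ _ => (ld i').map Prod.snd
        | _ => none
      | none => none

/-- Evaluation of expression `e` at the `i`-th fetched instruction of a thread. -/
def evalE {n : ℕ} (f : List Instr) (ld : ℕ → Option (StoreId n × Val))
    (i : ℕ) (e : Expr) : Option Val :=
  evalWith (fun r => regV f ld (i + 1) i r) e

namespace TState

variable {n : ℕ}

def eval (ts : TState n) (i : ℕ) (e : Expr) : Option Val :=
  evalE ts.fetched ts.loaded i e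

def cmdAt (ts : TState n) (i : ℕ) : Option Cmd :=
  (ts.fetched[i]?).map Instr.cmd

/-- Address argument of the `i`-th fetched instruction (`none` = `⊥` or `⊤`). -/
def getaddr (ts : TState n) (i : ℕ) : Option Val :=
  match ts.cmdAt i with
  | some (.load _ ea) => ts.eval i ea
  | some (.store ea _) => ts.eval i ea
  | _ => none

/-- Value argument of the `i`-th fetched instruction (`none` = `⊥` or `⊤`). -/
def getvalue (ts : TState n) (i : ℕ) : Option Val :=
  match ts.cmdAt i with
  | some (.store _ ev) => ts.eval i ev
  | some (.assign _ ev) => ts.eval i ev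
  | some (.assume_ ev) => ts.eval i ev
  | _ => none

end TState

/-- Dependencies of an expression via a register-dependency oracle. -/
def exprDepsWith (ρ : Reg → Set ℕ) : Expr → Set ℕ
  | .const _ => ∅
  | .reg r => ρ r
  | .fn _ e₁ e₂ => exprDepsWith ρ e₁ ∪ exprDepsWith ρ e₂

/-- Indices of the instructions on which the value of register `r` before position `i`
depends (loads and, transitively through assignments, their dependencies). -/
def regDeps (f : List Instr) : ℕ → ℕ → Reg → Set ℕ
  | 0, _, _ => ∅
  | fuel + 1, i, r =>
    match lastWrite f i r with
    | none => ∅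
    | some i' =>
      {i'} ∪
        (match f[i']? with
         | some ins =>
           match ins.cmd with
           | .assign _ e => exprDepsWith (fun r' => regDeps f fuel i' r') e
           | _ => ∅
         | none => ∅)

def exprDeps (f : List Instr) (i : ℕ) (e : Expr) : Set ℕ :=
  exprDepsWith (fun r => regDeps f (i + 1) i r) e

namespace TState

variable {n : ℕ}

/-- Address dependencies of the `i`-th fetched instruction. -/
def addrDeps (ts : TState n) (i : ℕ) : Set ℕ :=
  match ts.cmdAt i with
  | some (.load _ ea) => exprDeps ts.fetched i ea
  | some (.store ea _) => exprDeps ts.fetched i ea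
  | _ => ∅

/-- Data dependencies of the `i`-th fetched instruction. -/
def dataDeps (ts : TState n) (i : ℕ) : Set ℕ :=
  match ts.cmdAt i with
  | some (.store _ ev) => exprDeps ts.fetched i ev
  | some (.assign _ ev) => exprDeps ts.fetched i ev
  | some (.assume_ ev) => exprDeps ts.fetched i ev
  | _ => ∅

/-- Control dependencies: all earlier fetched conditionals. -/
def ctrlDeps (ts : TState n) (i : ℕ) : Set ℕ :=
  {i' | i' < i ∧ ∃ e, ts.cmdAt i' = some (.assume_ e)}

end TState

/-- State of the storage subsystem: coherence keys of committed stores, and for each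
thread and address the last store propagated to that thread. -/
structure SState (n : ℕ) where
  coh : Fin n → ℕ → Option ℚ
  propTo : Fin n → Val → StoreId n

/-- Coherence key of a store (initial stores have key `0`). -/
def SState.keyOf {n : ℕ} (ss : SState n) : StoreId n → ℚ
  | .init _ => 0
  | .st t i => (ss.coh t i).getD 0

/-- A state of the Power automaton. -/
structure PState (n : ℕ) where
  rt : Fin n → TState n
  ss : SState n

/-- Value written by a store, computed in the thread that issued it
(initial stores write `0`). -/
def storeVal {n : ℕ} (s : PState n) : StoreId n → Option Val
  | .init _ => some 0
  | .st t i => (s.rt t).getvalue i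

/-- Events of the Power semantics. -/
inductive Event (n : ℕ) : Type
  | fetch : Fin n → ℕ → Instr → Event n
  | load : Fin n → ℕ → Val → Event n
  | commit : Fin n → ℕ → Event n
  | commitStore : Fin n → ℕ → ℚ → Val → Event n
  | prop : Fin n → Fin n → ℕ → Val → Event n

/-- The instruction (thread id, fetch index) an event belongs to. -/
def Event.instrOf {n : ℕ} : Event n → Fin n × ℕ
  | .fetch t i _ => (t, i)
  | .load t i _ => (t, i)
  | .commit t i => (t, i)
  | .commitStore t i _ _ => (t, i)
  | .prop _ t' i _ => (t', i)

/-- Common preconditions for committing the `i`-th fetched instruction of thread `t`: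
it is fetched, not yet committed, all its address, data and control dependencies are
committed, and (for memory accesses) all earlier fetched accesses to the same or to a
still-unknown address are committed. -/
def canCommit {n : ℕ} (s : PState n) (t : Fin n) (i : ℕ) : Prop :=
  i < (s.rt t).fetched.length ∧ i ∉ (s.rt t).committed ∧
  ((s.rt t).addrDeps i ∪ (s.rt t).dataDeps i ∪ (s.rt t).ctrlDeps i) ⊆ (s.rt t).committed ∧
  (∀ a, (s.rt t).getaddr i = some a →
    ∀ i' < i, (∃ c, (s.rt t).cmdAt i' = some c ∧ c.isMem) →
      ((s.rt t).getaddr i' = none ∨ (s.rt t).getaddr i' = some a) →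
      i' ∈ (s.rt t).committed)

/-- The transition relation of the Power automaton of a program. -/
inductive Step {n : ℕ} (P : Program n) : PState n → Event n → PState n → Prop
  /-- POW-FETCH -/
  | fetch {s : PState n} {t : Fin n} {ins : Instr} :
      ins ∈ (P t).instrs →
      ins.src = (match (s.rt t).fetched.getLast? with
                 | some lst => lst.dst
                 | none => (P t).start) →
      Step P s (.fetch t (s.rt t).fetched.length ins)
        { s with rt := (Function.update s.rt t
            { s.rt t with fetched := (s.rt t).fetched ++ [ins] }) }
  /-- POW-LOAD: read from the last store propagated to the thread. -/
  | loadMem {s : PState n} {t : Fin n} {i : ℕ} {a v : Val} {w : StoreId n} :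
      (∃ r ea, (s.rt t).cmdAt i = some (.load r ea)) →
      (s.rt t).loaded i = none →
      (s.rt t).getaddr i = some a →
      w = s.ss.propTo t a →
      storeVal s w = some v →
      Step P s (.load t i a)
        { s with rt := (Function.update s.rt t
            { s.rt t with loaded := Function.update (s.rt t).loaded i (some (w, v)) }) }
  /-- POW-EARLY: forward the value of the latest uncommitted program-order-earlier
  store to the same address. -/
  | loadEarly {s : PState n} {t : Fin n} {i i' : ℕ} {a v : Val} :
      (∃ r ea, (s.rt t).cmdAt i = some (.load r ea)) →
      (s.rt t).loaded i = none →
      (s.rt t).getaddr i = some a →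
      i' < i →
      (∃ ea ev, (s.rt t).cmdAt i' = some (.store ea ev)) →
      (s.rt t).getaddr i' = some a →
      (∀ j, i' < j → j < i → (∃ ea ev, (s.rt t).cmdAt j = some (.store ea ev)) →
        ¬((s.rt t).getaddr j = none ∨ (s.rt t).getaddr j = some a)) →
      (s.rt t).getvalue i' = some v →
      i' ∉ (s.rt t).committed →
      Step P s (.load t i a)
        { s with rt := (Function.update s.rt t
            { s.rt t with loaded := Function.update (s.rt t).loaded i (some (.st t i', v)) }) }
  /-- POW-COMMIT (non-store instructions). -/
  | commitSimple {s : PState n} {t : Fin n} {i : ℕ} :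
      canCommit s t i →
      (∀ c, (s.rt t).cmdAt i = some c → ¬ c.isStore) →
      (∀ r ea, (s.rt t).cmdAt i = some (.load r ea) →
        (s.rt t).loaded i ≠ none ∧ ∃ a, (s.rt t).getaddr i = some a) →
      (∀ r ev, (s.rt t).cmdAt i = some (.assign r ev) → ∃ v, (s.rt t).getvalue i = some v) →
      (∀ ev, (s.rt t).cmdAt i = some (.assume_ ev) →
        ∃ v, (s.rt t).getvalue i = some v ∧ v ≠ 0) →
      Step P s (.commit t i)
        { s with rt := (Function.update s.rt t
            { s.rt t with committed := insert i (s.rt t).committed }) }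
  /-- POW-STORE: commit a store, assigning it a fresh coherence key. -/
  | commitStore {s : PState n} {t : Fin n} {i : ℕ} {k : ℚ} {a v : Val} :
      canCommit s t i →
      (∃ ea ev, (s.rt t).cmdAt i = some (.store ea ev)) →
      (s.rt t).getaddr i = some a →
      (s.rt t).getvalue i = some v →
      (∀ t' i', s.ss.coh t' i' ≠ some k) →
      Step P s (.commitStore t i k a)
        ⟨Function.update s.rt t { s.rt t with committed := insert i (s.rt t).committed },
         { s.ss with coh := (Function.update s.ss.coh t
             (Function.update (s.ss.coh t) i (some k))) }⟩
  /-- POW-PROP: propagate a committed store to a thread, provided it is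
  coherence-order-later than the last store to this address propagated there. -/
  | propagate {s : PState n} {t t' : Fin n} {i' : ℕ} {a : Val} {k : ℚ} :
      s.ss.coh t' i' = some k →
      (∃ ea ev, (s.rt t').cmdAt i' = some (.store ea ev)) →
      (s.rt t').getaddr i' = some a →
      s.ss.keyOf (s.ss.propTo t a) < k →
      Step P s (.prop t t' i' a)
        { s with ss := ({ s.ss with propTo := (Function.update s.ss.propTo t
            (Function.update (s.ss.propTo t) a (.st t' i'))) }) }

/-- Multi-step runs, recording the produced event sequence. -/
inductive Run {n : ℕ} (P : Program n) : PState n → List (Event n) → PState n → Prop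
  | refl (s : PState n) : Run P s [] s
  | step {s s' s'' : PState n} {e : Event n} {σ : List (Event n)} :
      Step P s e s' → Run P s' σ s'' → Run P s (e :: σ) s''

/-- The initial state of the Power automaton. -/
def initState (n : ℕ) : PState n :=
  ⟨fun _ => ⟨[], ∅, fun _ => none⟩, ⟨fun _ _ => none, fun _ a => .init a⟩⟩

/-- Final states: all fetched instructions are committed (FIN-COMM), loads of a common
address agree with the coherence order (FIN-LD), and loads agree with program-order-earlier
stores of the same thread to the same address (FIN-LD-ST). -/
def FinalState {n : ℕ} (s : PState n) : Prop :=
  ∀ t : Fin n,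
    (∀ i, i < (s.rt t).fetched.length ↔ i ∈ (s.rt t).committed) ∧
    (∀ i i' a, i' < i →
      (s.rt t).getaddr i = some a → (s.rt t).getaddr i' = some a →
      (∃ r ea, (s.rt t).cmdAt i = some (.load r ea)) →
      (∃ r ea, (s.rt t).cmdAt i' = some (.load r ea)) →
      ∀ w v w' v', (s.rt t).loaded i = some (w, v) → (s.rt t).loaded i' = some (w', v') →
        s.ss.keyOf w' ≤ s.ss.keyOf w) ∧
    (∀ i i' a, i' < i →
      (s.rt t).getaddr i = some a → (s.rt t).getaddr i' = some a →
      (∃ r ea, (s.rt t).cmdAt i = some (.load r ea)) →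
      (∃ ea ev, (s.rt t).cmdAt i' = some (.store ea ev)) →
      ∀ w v, (s.rt t).loaded i = some (w, v) →
        s.ss.keyOf (.st t i') ≤ s.ss.keyOf w)

/-- A store-commit event is immediately followed by the propagation of that store
to its own thread. -/
def ImmediateProp {n : ℕ} (σ : List (Event n)) : Prop :=
  ∀ σ₁ (t : Fin n) (i : ℕ) (k : ℚ) (a : Val) σ₂,
    σ = σ₁ ++ Event.commitStore t i k a :: σ₂ →
    ∃ σ₃, σ₂ = Event.prop t t i a :: σ₃

/-- The set of Power computations of a program. -/
def CPower {n : ℕ} (P : Program n) : Set (List (Event n)) :=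
  {σ | ∃ s, Run P (initState n) σ s ∧ FinalState s ∧ ImmediateProp σ}

end PowerModel

namespace PowerModel

/-! ### Auxiliary lemmas -/

variable {n : ℕ}

section Eval

lemma evalWith_mono {ρ ρ' : Reg → Option Val} (h : ∀ r x, ρ r = some x → ρ' r = some x) :
    ∀ (e : Expr) {v : Val}, evalWith ρ e = some v → evalWith ρ' e = some v := by
  intro e
  induction e with
  | const c => simp [evalWith]
  | reg r => exact fun hv => h r _ hv
  | fn g e₁ e₂ ih₁ ih₂ =>
    intro v hv
    simp only [evalWith, Option.bind_eq_some_iff, Option.map_eq_some_iff] at hv ⊢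
    obtain ⟨a, ha, b, hb, rfl⟩ := hv
    exact ⟨a, ih₁ ha, b, ih₂ hb, rfl⟩

lemma find?_congr {α : Type*} {p q : α → Bool} :
    ∀ l : List α, (∀ x ∈ l, p x = q x) → l.find? p = l.find? q := by
  intro l
  induction l with
  | nil => intro _; rfl
  | cons a l ih =>
    intro h
    rw [List.find?_cons, List.find?_cons, h a (by simp)]
    cases q a
    · exact ih fun x hx => h x (by simp [hx])
    · rfl

lemma lastWrite_congr {f f' : List Instr} {i : ℕ}
    (h : ∀ j, j < i → f[j]? = f'[j]?) (r : Reg) :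
    lastWrite f i r = lastWrite f' i r := by
  unfold lastWrite
  apply find?_congr
  intro j hj
  rw [h j (by simpa using hj)]

lemma lastWrite_lt {f : List Instr} {i i' : ℕ} {r : Reg}
    (h : lastWrite f i r = some i') : i' < i := by
  have := List.mem_of_find?_eq_some h
  simpa using this

lemma regV_mono {f f' : List Instr} {ld ld' : ℕ → Option (StoreId n × Val)}
    (hld : ∀ j p, ld j = some p → ld' j = some p) :
    ∀ (fuel i : ℕ), (∀ j, j < i → f[j]? = f'[j]?) →
      ∀ (r : Reg) (v : Val), regV f ld fuel i r = some v → regV f' ld' fuel i r = some v := by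
  intro fuel
  induction fuel with
  | zero => intro i _ r v h; simp [regV] at h
  | succ fuel ih =>
    intro i hf r v hv
    rw [regV] at hv ⊢
    rw [← lastWrite_congr hf r]
    cases hlw : lastWrite f i r with
    | none => rw [hlw] at hv; exact hv
    | some i' =>
      have hi' : i' < i := lastWrite_lt hlw
      rw [hlw] at hv
      dsimp only at hv ⊢
      rw [← hf i' hi']
      cases hg : f[i']? with
      | none => rw [hg] at hv; exact absurd hv (by simp)
      | some ins =>
        cases hc : ins.cmd with
        | load r₀ e₀ =>
          simp only [hg, hc, Option.map_eq_some_iff] at hv ⊢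
          obtain ⟨p, hp, rfl⟩ := hv
          exact ⟨p, hld _ _ hp, rfl⟩
        | store e₀ e₁ => simp only [hg, hc] at hv; cases hv
        | assign r₀ e₀ =>
          simp only [hg, hc] at hv ⊢
          exact evalWith_mono (fun r' x hx => ih i' (fun j hj => hf j (hj.trans hi')) r' x hx)
            e₀ hv
        | assume_ e₀ => simp only [hg, hc] at hv; cases hv

end Eval

section MonoInv

lemma cmdAt_lt_len {ts : TState n} {i : ℕ} {c : Cmd} (h : ts.cmdAt i = some c) :
    i < ts.fetched.length := by
  unfold TState.cmdAt at h
  cases hg : ts.fetched[i]? with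
  | none => rw [hg] at h; cases h
  | some ins =>
    by_contra hlen
    rw [List.getElem?_eq_none (le_of_not_gt hlen)] at hg
    cases hg

lemma get?_append_of_some {l l' : List Instr} {j : ℕ} {x : Instr}
    (h : l[j]? = some x) : (l ++ l')[j]? = some x := by
  have hj : j < l.length := by
    by_contra h'
    rw [List.getElem?_eq_none (le_of_not_gt h')] at h
    cases h
  rw [List.getElem?_append_left hj]
  exact h

/-- Monotone evolution data along a step/run. -/
structure Mono (s s' : PState n) : Prop where
  fet : ∀ t (j : ℕ) x, (s.rt t).fetched[j]? = some x → (s'.rt t).fetched[j]? = some x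
  ld : ∀ t j p, (s.rt t).loaded j = some p → (s'.rt t).loaded j = some p
  com : ∀ t, (s.rt t).committed ⊆ (s'.rt t).committed
  coh : ∀ t j k, s.ss.coh t j = some k → s'.ss.coh t j = some k
  key : ∀ t a, s.ss.keyOf (s.ss.propTo t a) ≤ s'.ss.keyOf (s'.ss.propTo t a)

lemma Mono.refl (s : PState n) : Mono s s :=
  ⟨fun _ _ _ h => h, fun _ _ _ h => h, fun _ => le_refl _, fun _ _ _ h => h, fun _ _ => le_rfl⟩

lemma Mono.comp {s₁ s₂ s₃ : PState n} (m : Mono s₁ s₂) (m' : Mono s₂ s₃) : Mono s₁ s₃ :=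
  ⟨fun t j x h => m'.fet t j x (m.fet t j x h),
   fun t j p h => m'.ld t j p (m.ld t j p h),
   fun t => (m.com t).trans (m'.com t),
   fun t j k h => m'.coh t j k (m.coh t j k h),
   fun t a => (m.key t a).trans (m'.key t a)⟩

lemma Mono.get?_eq {s s' : PState n} (m : Mono s s') {t : Fin n} {i : ℕ}
    (hi : i ≤ (s.rt t).fetched.length) :
    ∀ j, j < i → (s.rt t).fetched[j]? = (s'.rt t).fetched[j]? := by
  intro j hj
  cases hg : (s.rt t).fetched[j]? with
  | some x => exact (m.fet t j x hg).symm
  | none =>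
    have := List.getElem?_eq_none_iff.mp hg
    omega

lemma Mono.cmdAt {s s' : PState n} (m : Mono s s') {t : Fin n} {i : ℕ} {c : Cmd}
    (h : (s.rt t).cmdAt i = some c) : (s'.rt t).cmdAt i = some c := by
  unfold TState.cmdAt at h ⊢
  rw [Option.map_eq_some_iff] at h ⊢
  obtain ⟨ins, hg, rfl⟩ := h
  exact ⟨ins, m.fet t i ins hg, rfl⟩

lemma Mono.eval {s s' : PState n} (m : Mono s s') {t : Fin n} {i : ℕ} {e : Expr} {v : Val}
    (hi : i ≤ (s.rt t).fetched.length)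
    (h : (s.rt t).eval i e = some v) : (s'.rt t).eval i e = some v := by
  unfold TState.eval evalE at h ⊢
  exact evalWith_mono (fun r x hx => regV_mono (m.ld t) (i + 1) i (m.get?_eq hi) r x hx) e h

lemma Mono.getaddr {s s' : PState n} (m : Mono s s') {t : Fin n} {i : ℕ} {a : Val}
    (h : (s.rt t).getaddr i = some a) : (s'.rt t).getaddr i = some a := by
  unfold TState.getaddr at h ⊢
  cases hc : (s.rt t).cmdAt i with
  | none => rw [hc] at h; cases h
  | some c =>
    have hl : i ≤ (s.rt t).fetched.length := le_of_lt (cmdAt_lt_len hc)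
    rw [hc] at h
    rw [m.cmdAt hc]
    cases c with
    | load r ea => exact m.eval hl h
    | store ea ev => exact m.eval hl h
    | assign r ev => cases h
    | assume_ ev => cases h

/-- Reachability invariant: propagated stores have keys, keyed stores are committed. -/
def Inv (s : PState n) : Prop :=
  (∀ t a t₂ j, s.ss.propTo t a = .st t₂ j → s.ss.coh t₂ j ≠ none) ∧
  (∀ t j, s.ss.coh t j ≠ none → j ∈ (s.rt t).committed)

lemma keyOf_eq_of_mono {s s' : PState n} (m : Mono s s') {w : StoreId n}
    (hw : ∀ t j, w = .st t j → s.ss.coh t j ≠ none) :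
    s'.ss.keyOf w = s.ss.keyOf w := by
  cases w with
  | init a => rfl
  | st t j =>
    obtain ⟨k, hk⟩ := Option.ne_none_iff_exists'.mp (hw t j rfl)
    simp [SState.keyOf, hk, m.coh t j k hk]

lemma step_mono_inv {P : Program n} {s : PState n} {e : Event n} {s' : PState n}
    (hInv : Inv s) (hs : Step P s e s') : Inv s' ∧ Mono s s' := by
  obtain ⟨hInv1, hInv2⟩ := hInv
  cases hs with
  | @fetch t ins hmem hsrc =>
    refine ⟨⟨hInv1, ?_⟩, ?_, ?_, ?_, fun _ _ _ h => h, fun _ _ => le_rfl⟩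
    · intro t' j h
      have := hInv2 t' j h
      by_cases ht : t' = t
      · subst ht; simpa using this
      · simpa [Function.update_of_ne ht] using this
    · intro t' j x hx
      by_cases ht : t' = t
      · subst ht
        simp only [Function.update_self]
        exact get?_append_of_some hx
      · simpa [Function.update_of_ne ht] using hx
    · intro t' j p hp
      by_cases ht : t' = t
      · subst ht; simpa using hp
      · simpa [Function.update_of_ne ht] using hp
    · intro t'
      by_cases ht : t' = t
      · subst ht; simp
      · simp [Function.update_of_ne ht]
  | @loadMem t i a v w h1 h2 h3 h4 h5 =>
    refine ⟨⟨hInv1, ?_⟩, ?_, ?_, ?_, fun _ _ _ h => h, fun _ _ => le_rfl⟩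
    · intro t' j h
      have := hInv2 t' j h
      by_cases ht : t' = t
      · subst ht; simpa using this
      · simpa [Function.update_of_ne ht] using this
    · intro t' j x hx
      by_cases ht : t' = t
      · subst ht; simpa using hx
      · simpa [Function.update_of_ne ht] using hx
    · intro t' j p hp
      by_cases ht : t' = t
      · subst ht
        simp only [Function.update_self]
        by_cases hj : j = i
        · subst hj; rw [h2] at hp; cases hp
        · rw [Function.update_of_ne hj]; exact hp
      · simpa [Function.update_of_ne ht] using hp
    · intro t'
      by_cases ht : t' = t
      · subst ht; simp
      · simp [Function.update_of_ne ht]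
  | @loadEarly t i i' a v h1 h2 h3 h4 h5 h6 h7 h8 h9 =>
    refine ⟨⟨hInv1, ?_⟩, ?_, ?_, ?_, fun _ _ _ h => h, fun _ _ => le_rfl⟩
    · intro t' j h
      have := hInv2 t' j h
      by_cases ht : t' = t
      · subst ht; simpa using this
      · simpa [Function.update_of_ne ht] using this
    · intro t' j x hx
      by_cases ht : t' = t
      · subst ht; simpa using hx
      · simpa [Function.update_of_ne ht] using hx
    · intro t' j p hp
      by_cases ht : t' = t
      · subst ht
        simp only [Function.update_self]
        by_cases hj : j = i
        · subst hj; rw [h2] at hp; cases hp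
        · rw [Function.update_of_ne hj]; exact hp
      · simpa [Function.update_of_ne ht] using hp
    · intro t'
      by_cases ht : t' = t
      · subst ht; simp
      · simp [Function.update_of_ne ht]
  | @commitSimple t i h1 h2 h3 h4 h5 =>
    refine ⟨⟨hInv1, ?_⟩, ?_, ?_, ?_, fun _ _ _ h => h, fun _ _ => le_rfl⟩
    · intro t' j h
      have := hInv2 t' j h
      by_cases ht : t' = t
      · subst ht; simp only [Function.update_self]; exact Set.mem_insert_of_mem _ this
      · simpa [Function.update_of_ne ht] using this
    · intro t' j x hx
      by_cases ht : t' = t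
      · subst ht; simpa using hx
      · simpa [Function.update_of_ne ht] using hx
    · intro t' j p hp
      by_cases ht : t' = t
      · subst ht; simpa using hp
      · simpa [Function.update_of_ne ht] using hp
    · intro t'
      by_cases ht : t' = t
      · subst ht; simp only [Function.update_self]; exact Set.subset_insert _ _
      · simp [Function.update_of_ne ht]
  | @commitStore t i k a v h1 h2 h3 h4 h5 =>
    have hni : i ∉ (s.rt t).committed := h1.2.1
    have hcohn : s.ss.coh t i = none := by
      by_contra h
      exact hni (hInv2 t i h)
    have hcoh_mono : ∀ t₂ j k₂, s.ss.coh t₂ j = some k₂ →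
        (Function.update s.ss.coh t (Function.update (s.ss.coh t) i (some k))) t₂ j
          = some k₂ := by
      intro t₂ j k₂ hk₂
      by_cases ht : t₂ = t
      · subst ht
        simp only [Function.update_self]
        by_cases hj : j = i
        · subst hj; rw [hcohn] at hk₂; cases hk₂
        · rw [Function.update_of_ne hj]; exact hk₂
      · rw [Function.update_of_ne ht]; exact hk₂
    refine ⟨⟨?_, ?_⟩, ?_, ?_, ?_, hcoh_mono, ?_⟩
    · intro t' a' t₂ j h
      dsimp only at h ⊢
      have := hInv1 t' a' t₂ j h
      obtain ⟨k₂, hk₂⟩ := Option.ne_none_iff_exists'.mp this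
      rw [hcoh_mono t₂ j k₂ hk₂]
      simp
    · intro t' j h
      dsimp only at h ⊢
      by_cases ht : t' = t
      · subst ht
        simp only [Function.update_self] at h ⊢
        by_cases hj : j = i
        · subst hj; exact Set.mem_insert _ _
        · rw [Function.update_of_ne hj] at h
          exact Set.mem_insert_of_mem _ (hInv2 t' j h)
      · rw [Function.update_of_ne ht] at h
        rw [Function.update_of_ne ht]
        exact hInv2 t' j h
    · intro t' j x hx
      by_cases ht : t' = t
      · subst ht; simpa using hx
      · simpa [Function.update_of_ne ht] using hx
    · intro t' j p hp
      by_cases ht : t' = t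
      · subst ht; simpa using hp
      · simpa [Function.update_of_ne ht] using hp
    · intro t'
      by_cases ht : t' = t
      · subst ht; simp only [Function.update_self]; exact Set.subset_insert _ _
      · simp [Function.update_of_ne ht]
    · intro t' a'
      dsimp only
      cases hw : s.ss.propTo t' a' with
      | init b => simp [SState.keyOf]
      | st t₂ j =>
        have := hInv1 t' a' t₂ j hw
        obtain ⟨k₂, hk₂⟩ := Option.ne_none_iff_exists'.mp this
        simp [SState.keyOf, hk₂, hcoh_mono t₂ j k₂ hk₂]
  | @propagate t t' i' a k h1 h2 h3 h4 =>
    refine ⟨⟨?_, hInv2⟩, fun _ _ _ h => h, fun _ _ _ h => h, fun _ => le_refl _,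
      fun _ _ _ h => h, ?_⟩
    · intro t₀ a₀ t₂ j h
      dsimp only at h ⊢
      by_cases ht : t₀ = t
      · subst ht
        simp only [Function.update_self] at h
        by_cases ha : a₀ = a
        · subst ha
          rw [Function.update_self] at h
          cases h
          rw [h1]
          simp
        · rw [Function.update_of_ne ha] at h
          exact hInv1 t₀ a₀ t₂ j h
      · rw [Function.update_of_ne ht] at h
        exact hInv1 t₀ a₀ t₂ j h
    · intro t₀ a₀
      dsimp only
      by_cases ht : t₀ = t
      · subst ht
        simp only [Function.update_self]
        by_cases ha : a₀ = a
        · subst ha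
          rw [Function.update_self]
          have : (SState.mk s.ss.coh (Function.update s.ss.propTo t₀
              (Function.update (s.ss.propTo t₀) a₀ (StoreId.st t' i')))).keyOf
                (StoreId.st t' i') = k := by
            simp [SState.keyOf, h1]
          calc s.ss.keyOf (s.ss.propTo t₀ a₀) ≤ k := le_of_lt h4
            _ = _ := by rw [← this]
        · rw [Function.update_of_ne ha]
          exact le_of_eq (by cases hval : s.ss.propTo t₀ a₀ <;> simp [SState.keyOf])
      · rw [Function.update_of_ne ht]
        exact le_of_eq (by cases hval : s.ss.propTo t₀ a₀ <;> simp [SState.keyOf])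

lemma run_mono_inv {P : Program n} {σ : List (Event n)} {s s' : PState n}
    (h : Run P s σ s') : Inv s → Inv s' ∧ Mono s s' := by
  induction h with
  | refl s => exact fun hInv => ⟨hInv, Mono.refl s⟩
  | step hst _ ih =>
    intro hInv
    obtain ⟨h1, h2⟩ := step_mono_inv hInv hst
    obtain ⟨h3, h4⟩ := ih h1
    exact ⟨h3, h2.comp h4⟩

end MonoInv

section Determinism

lemma immediateProp_tail {e : Event n} {σ : List (Event n)}
    (h : ImmediateProp (e :: σ)) : ImmediateProp σ := by
  intro σ₁ t i k a σ₂ hσ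
  exact h (e :: σ₁) t i k a σ₂ (by simp [hσ])

lemma commit_found {P : Program n} {t : Fin n} {i' : ℕ} {σ : List (Event n)} {r sf : PState n}
    (h : Run P r σ sf) :
    i' ∉ (r.rt t).committed → i' ∈ (sf.rt t).committed →
    ∃ (σ₁ : List (Event n)) (e : Event n) (σ₂ : List (Event n)) (u u' : PState n),
      σ = σ₁ ++ e :: σ₂ ∧ Run P r σ₁ u ∧ Step P u e u' ∧
      Run P u' σ₂ sf ∧ i' ∉ (u.rt t).committed ∧ i' ∈ (u'.rt t).committed := by
  induction h with
  | refl s => exact fun h₁ h₂ => absurd h₂ h₁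
  | @step s sm sf' e σ' hst hr ih =>
    intro h₁ h₂
    by_cases hm : i' ∈ (sm.rt t).committed
    · exact ⟨[], e, σ', s, sm, rfl, Run.refl s, hst, hr, h₁, hm⟩
    · obtain ⟨σ₁, e₀, σ₂, u, u', heq, hrun₁, hstep, hrun₂, hu, hu'⟩ := ih hm h₂
      exact ⟨e :: σ₁, e₀, σ₂, u, u', by rw [heq]; rfl, Run.step hst hrun₁, hstep, hrun₂, hu, hu'⟩

lemma commit_event {P : Program n} {u u' : PState n} {e : Event n}
    (h : Step P u e u') {t : Fin n} {i' : ℕ}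
    (h₁ : i' ∉ (u.rt t).committed) (h₂ : i' ∈ (u'.rt t).committed) :
    (e = .commit t i' ∧ ∀ c, (u.rt t).cmdAt i' = some c → ¬ c.isStore) ∨
    (∃ k a, e = .commitStore t i' k a ∧ (u.rt t).getaddr i' = some a ∧
      u'.ss.coh t i' = some k) := by
  cases h with
  | @fetch t₀ ins hmem hsrc =>
    exfalso; apply h₁
    by_cases ht : t = t₀
    · subst ht; simpa using h₂
    · simpa [Function.update_of_ne ht] using h₂
  | @loadMem t₀ i a v w hl1 hl2 hl3 hl4 hl5 =>
    exfalso; apply h₁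
    by_cases ht : t = t₀
    · subst ht; simpa using h₂
    · simpa [Function.update_of_ne ht] using h₂
  | @loadEarly t₀ i i₀ a v hl1 hl2 hl3 hl4 hl5 hl6 hl7 hl8 hl9 =>
    exfalso; apply h₁
    by_cases ht : t = t₀
    · subst ht; simpa using h₂
    · simpa [Function.update_of_ne ht] using h₂
  | @commitSimple t₀ i₀ hc1 hc2 hc3 hc4 hc5 =>
    by_cases ht : t = t₀
    · subst ht
      simp only [Function.update_self] at h₂
      rcases Set.mem_insert_iff.mp h₂ with rfl | hm
      · exact Or.inl ⟨rfl, hc2⟩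
      · exact absurd hm h₁
    · exfalso; apply h₁
      simpa [Function.update_of_ne ht] using h₂
  | @commitStore t₀ i₀ k a v hc1 hc2 hc3 hc4 hc5 =>
    by_cases ht : t = t₀
    · subst ht
      dsimp only at h₂
      simp only [Function.update_self] at h₂
      rcases Set.mem_insert_iff.mp h₂ with rfl | hm
      · refine Or.inr ⟨k, a, rfl, hc3, ?_⟩
        dsimp only
        simp [Function.update_self]
      · exact absurd hm h₁
    · exfalso; apply h₁
      dsimp only at h₂
      simpa [Function.update_of_ne ht] using h₂
  | @propagate t₀ t₁ i₀ a k hp1 hp2 hp3 hp4 =>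
    exact absurd h₂ h₁

lemma loadMem_bad {P : Program n} {s : PState n} {t : Fin n} {i i' : ℕ} {a v : Val}
    {w : StoreId n} {σ : List (Event n)} {sf : PState n}
    (hInv : Inv s)
    (hld : ∃ r ea, (s.rt t).cmdAt i = some (.load r ea))
    (hldnone : (s.rt t).loaded i = none)
    (ha : (s.rt t).getaddr i = some a)
    (hw : w = s.ss.propTo t a)
    (hsv : storeVal s w = some v)
    (hii : i' < i)
    (hst : ∃ ea ev, (s.rt t).cmdAt i' = some (.store ea ev))
    (ha' : (s.rt t).getaddr i' = some a)
    (hnc : i' ∉ (s.rt t).committed)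
    (hrun : Run P
      { s with rt := (Function.update s.rt t
          { s.rt t with loaded := Function.update (s.rt t).loaded i (some (w, v)) }) } σ sf)
    (hfin : FinalState sf) (himm : ImmediateProp σ) : False := by
  obtain ⟨r₀, ea, hcmd⟩ := hld
  obtain ⟨ea', ev', hcmd'⟩ := hst
  have hstep : Step P s (.load t i a) _ := Step.loadMem ⟨r₀, ea, hcmd⟩ hldnone ha hw hsv
  obtain ⟨hInv_r, m_sr⟩ := step_mono_inv hInv hstep
  obtain ⟨hInv_f, m_rf⟩ := run_mono_inv hrun hInv_r
  have m_sf := m_sr.comp m_rf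
  -- the load value is preserved to the final state
  have hload_r : (Function.update s.rt t
      { s.rt t with loaded := Function.update (s.rt t).loaded i (some (w, v)) } t).loaded i
        = some (w, v) := by simp
  have hload_f : (sf.rt t).loaded i = some (w, v) := m_rf.ld t i (w, v) hload_r
  -- i' is eventually committed
  have hcmd_f : (sf.rt t).cmdAt i = some (.load r₀ ea) := m_sf.cmdAt hcmd
  have hcmd'_f : (sf.rt t).cmdAt i' = some (.store ea' ev') := m_sf.cmdAt hcmd'
  have hlen_f : i' < (sf.rt t).fetched.length := lt_trans hii (cmdAt_lt_len hcmd_f)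
  have hcom_f : i' ∈ (sf.rt t).committed := ((hfin t).1 i').mp hlen_f
  have hnc_r : i' ∉ (Function.update s.rt t
      { s.rt t with loaded := Function.update (s.rt t).loaded i (some (w, v)) } t).committed := by
    simpa using hnc
  obtain ⟨σ₁, e, σ₂, u, u', heq, hrun₁, hstep_u, hrun₂, hu, hu'⟩ :=
    commit_found hrun hnc_r hcom_f
  obtain ⟨hInv_u, m_ru⟩ := run_mono_inv hrun₁ hInv_r
  have m_su := m_sr.comp m_ru
  -- identify the committing event: it must be a store commit for address a
  rcases commit_event hstep_u hu hu' with ⟨_, hns⟩ | ⟨k, a₂, rfl, haddr_u, hcoh_u'⟩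
  · exact hns _ (m_su.cmdAt hcmd') trivial
  obtain rfl : a = a₂ := Option.some.inj ((m_su.getaddr ha').symm.trans haddr_u)
  -- immediate propagation
  obtain ⟨σ₃, rfl⟩ := himm σ₁ t i' k a σ₂ heq
  obtain ⟨u'', hstep'', hrun₃⟩ : ∃ u'', Step P u' (.prop t t i' a) u'' ∧ Run P u'' σ₃ sf := by
    cases hrun₂ with | step hs hr => exact ⟨_, hs, hr⟩
  obtain ⟨hInv_u', m_uu'⟩ := step_mono_inv hInv_u hstep_u
  obtain ⟨hInv_u'', m_u'u''⟩ := step_mono_inv hInv_u' hstep''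
  obtain ⟨_, m_u''f⟩ := run_mono_inv hrun₃ hInv_u''
  have m_su' := m_su.comp m_uu'
  -- the key of i' in the final state is k
  have hcoh_u'' : u''.ss.coh t i' = some k := m_u'u''.coh t i' k hcoh_u'
  have hcoh_f : sf.ss.coh t i' = some k := m_u''f.coh t i' k hcoh_u''
  have hkey_f : sf.ss.keyOf (.st t i') = k := by simp [SState.keyOf, hcoh_f]
  -- w is init or keyed in s, so its key is constant
  have hwk : ∀ t₂ j, w = .st t₂ j → s.ss.coh t₂ j ≠ none := by
    intro t₂ j hsw
    exact hInv.1 t a t₂ j (hw ▸ hsw)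
  have hkw_f : sf.ss.keyOf w = s.ss.keyOf w := keyOf_eq_of_mono m_sf hwk
  have hkw_u' : u'.ss.keyOf w = s.ss.keyOf w := keyOf_eq_of_mono m_su' hwk
  -- key of w is below k, via the propagation precondition
  have hprop_lt : u'.ss.keyOf (u'.ss.propTo t a) < k := by
    cases hstep'' with
    | @propagate _ _ _ _ k₀ hp1 hp2 hp3 hp4 =>
      have : k₀ = k := Option.some.inj ((hp1.symm.trans hcoh_u'))
      rw [← this]
      exact hp4
  have hle : s.ss.keyOf (s.ss.propTo t a) ≤ u'.ss.keyOf (u'.ss.propTo t a) :=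
    m_su'.key t a
  have hlt : s.ss.keyOf w < k := by
    rw [hw]
    exact lt_of_le_of_lt hle hprop_lt
  -- final-state condition FIN-LD-ST gives the contradiction
  have hfinst := (hfin t).2.2 i i' a hii (m_sf.getaddr ha) (m_sf.getaddr ha')
    ⟨r₀, ea, hcmd_f⟩ ⟨ea', ev', hcmd'_f⟩ w v hload_f
  rw [hkey_f, hkw_f] at hfinst
  exact absurd (lt_of_le_of_lt hfinst hlt) (lt_irrefl k)

lemma run_det {P : Program n} : ∀ (σ : List (Event n)) (s s₁ s₂ : PState n), Inv s →
    Run P s σ s₁ → FinalState s₁ → Run P s σ s₂ → FinalState s₂ → ImmediateProp σ →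
    s₁ = s₂ := by
  intro σ
  induction σ with
  | nil =>
    intro s s₁ s₂ _ h₁ _ h₂ _ _
    cases h₁; cases h₂; rfl
  | cons e σ' ih =>
    intro s s₁ s₂ hInv h₁ hf₁ h₂ hf₂ himm
    obtain ⟨r₁, hst₁, hr₁⟩ : ∃ r, Step P s e r ∧ Run P r σ' s₁ := by
      cases h₁ with | step a b => exact ⟨_, a, b⟩
    obtain ⟨r₂, hst₂, hr₂⟩ : ∃ r, Step P s e r ∧ Run P r σ' s₂ := by
      cases h₂ with | step a b => exact ⟨_, a, b⟩
    have himm' : ImmediateProp σ' := immediateProp_tail himm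
    have hIr₁ := (step_mono_inv hInv hst₁).1
    have hIr₂ := (step_mono_inv hInv hst₂).1
    cases hst₁ with
    | @fetch t ins hmem hsrc =>
      cases hst₂ with
      | fetch hmem₂ hsrc₂ =>
        exact ih _ _ _ hIr₁ hr₁ hf₁ hr₂ hf₂ himm'
    | @loadMem t i a v w h1 h2 h3 h4 h5 =>
      cases hst₂ with
      | @loadMem t₂ i₂ a₂ v₂ w₂ q1 q2 q3 q4 q5 =>
        subst h4; subst q4
        obtain rfl : v = v₂ := Option.some.inj (h5.symm.trans q5)
        exact ih _ _ _ hIr₁ hr₁ hf₁ hr₂ hf₂ himm'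
      | @loadEarly t₂ i₂ i₂' a₂ v₂ q1 q2 q3 q4 q5 q6 q7 q8 q9 =>
        subst h4
        exact (loadMem_bad hInv h1 h2 h3 rfl h5 q4 q5 q6 q9 hr₁ hf₁ himm').elim
    | @loadEarly t i i' a v h1 h2 h3 h4 h5 h6 h7 h8 h9 =>
      cases hst₂ with
      | @loadMem t₂ i₂ a₂ v₂ w₂ q1 q2 q3 q4 q5 =>
        subst q4
        exact (loadMem_bad hInv q1 q2 q3 rfl q5 h4 h5 h6 h9 hr₂ hf₂ himm').elim
      | @loadEarly t₂ i₂ i₂' a₂ v₂ q1 q2 q3 q4 q5 q6 q7 q8 q9 =>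
        obtain rfl : i' = i₂' := by
          rcases lt_trichotomy i' i₂' with hlt | heq | hgt
          · exact absurd (Or.inr q6) (h7 i₂' hlt q4 q5)
          · exact heq
          · exact absurd (Or.inr h6) (q7 i' hgt h4 h5)
        obtain rfl : v = v₂ := Option.some.inj (h8.symm.trans q8)
        exact ih _ _ _ hIr₁ hr₁ hf₁ hr₂ hf₂ himm'
    | @commitSimple t i h1 h2 h3 h4 h5 =>
      cases hst₂ with
      | commitSimple h1₂ h2₂ h3₂ h4₂ h5₂ =>
        exact ih _ _ _ hIr₁ hr₁ hf₁ hr₂ hf₂ himm'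
    | @commitStore t i k a v h1 h2 h3 h4 h5 =>
      cases hst₂ with
      | @commitStore t₂ i₂ k₂ a₂ v₂ q1 q2 q3 q4 q5 =>
        exact ih _ _ _ hIr₁ hr₁ hf₁ hr₂ hf₂ himm'
    | @propagate t t' i' a k h1 h2 h3 h4 =>
      cases hst₂ with
      | @propagate t₂ t₂' i₂' a₂ k₂ q1 q2 q3 q4 =>
        exact ih _ _ _ hIr₁ hr₁ hf₁ hr₂ hf₂ himm'

end Determinism

/-- the accepting state reached by a Power computation is unique:
if the initial state reaches final states `s` and `s'` via the same event sequence `σ`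
(of a computation of the program), then `s = s'`. -/
theorem final_state_unique {n : ℕ} (P : Program n) (σ : List (Event n)) (s s' : PState n)
    (h : Run P (initState n) σ s) (hf : FinalState s)
    (h' : Run P (initState n) σ s') (hf' : FinalState s')
    (himm : ImmediateProp σ) :
    s = s' := by
  have hInv0 : Inv (initState n) := by
    constructor
    · intro t a t₂ j h
      simp [initState] at h
    · intro t j h
      exact absurd rfl h
  exact run_det σ _ s s' hInv0 h hf h' hf' himm

end PowerModel
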